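/- Let X be a compact Hausdorff space and let f₁, f₂ : X → ℝ be continuous. Define λ₁(x) = min(f₁(x), f₂(x)) and λ₂(x) = max(f₁(x), f₂(x)). For any ε > 0, there exists a unitary u ∈ M₂(C(X)) such that ‖u · diag(f₁, f₂) · u* − diag(λ₁, λ₂)‖ < ε. -/

import Mathlib

open scoped Matrix.Norms.L2Operator

set_option maxHeartbeats 1000000 in
/-- For continuous `f₁ f₂ : X → ℝ` on a compact Hausdorff space `X` and
`λ₁ = min(f₁,f₂)`, `λ₂ = max(f₁,f₂)`, for every `ε > 0` there is a unitary
`u ∈ M₂(C(X))` with `‖u · diag(f₁,f₂) · u* − diag(λ₁,λ₂)‖ < ε`. -/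
theorem linear_span_stmt3 {X : Type*} [TopologicalSpace X] [CompactSpace X] [T2Space X]
    (f₁ f₂ : C(X, ℝ)) (ε : ℝ) (hε : 0 < ε) :
    ∃ u w : C(X, Matrix (Fin 2) (Fin 2) ℂ),
      (∀ x, star (u x) * u x = 1 ∧ u x * star (u x) = 1) ∧
      (∀ x, w x = u x * !![(f₁ x : ℂ), 0; 0, (f₂ x : ℂ)] * star (u x)
        - !![((min (f₁ x) (f₂ x) : ℝ) : ℂ), 0; 0, ((max (f₁ x) (f₂ x) : ℝ) : ℂ)]) ∧
      ‖w‖ < ε := by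
  open Matrix Real in
  set δ := ε / 2 with hδdef
  have hδ : 0 < δ := by positivity
  set θ : X → ℝ := fun x => (π / 2) * min 1 (max 0 ((δ - (f₂ x - f₁ x)) / (2 * δ))) with hθdef
  have hθc : Continuous θ := by fun_prop
  set c : X → ℝ := fun x => Real.cos (θ x) with hcdef
  set s : X → ℝ := fun x => Real.sin (θ x) with hsdef
  have hcs : ∀ x, (c x : ℂ) ^ 2 + (s x : ℂ) ^ 2 = 1 := by
    intro x
    have := Real.cos_sq_add_sin_sq (θ x)
    exact_mod_cast congrArg (Complex.ofReal) this
  let u : C(X, Matrix (Fin 2) (Fin 2) ℂ) :=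
    ⟨fun x => !![(c x : ℂ), -(s x : ℂ); (s x : ℂ), (c x : ℂ)], by
      apply continuous_matrix
      intro i j
      fin_cases i <;> fin_cases j <;> simp <;> fun_prop⟩
  have hustar : ∀ x, star (u x) = !![(c x : ℂ), (s x : ℂ); -(s x : ℂ), (c x : ℂ)] := by
    intro x
    ext i j
    fin_cases i <;> fin_cases j <;>
      simp [u, Matrix.star_apply]
  have hux : ∀ x, u x = !![(c x : ℂ), -(s x : ℂ); (s x : ℂ), (c x : ℂ)] := fun x => rfl
  have huni : ∀ x, star (u x) * u x = 1 ∧ u x * star (u x) = 1 := by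
    intro x
    rw [hustar, hux, Matrix.mul_fin_two, Matrix.mul_fin_two, Matrix.one_fin_two]
    constructor <;> ext i j <;> fin_cases i <;> fin_cases j <;> simp <;>
      first | linear_combination hcs x | linear_combination -hcs x
            | linear_combination 2*hcs x | linear_combination -2*hcs x | ring
  let D : C(X, Matrix (Fin 2) (Fin 2) ℂ) :=
    ⟨fun x => !![(f₁ x : ℂ), 0; 0, (f₂ x : ℂ)], by
      apply continuous_matrix
      intro i j
      fin_cases i <;> fin_cases j <;> simp <;> fun_prop⟩
  let L : C(X, Matrix (Fin 2) (Fin 2) ℂ) :=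
    ⟨fun x => !![((min (f₁ x) (f₂ x) : ℝ) : ℂ), 0; 0, ((max (f₁ x) (f₂ x) : ℝ) : ℂ)], by
      apply continuous_matrix
      intro i j
      fin_cases i <;> fin_cases j <;> simp <;> fun_prop⟩
  let w : C(X, Matrix (Fin 2) (Fin 2) ℂ) := u * D * star u - L
  have hw : ∀ x, w x = u x * D x * star (u x) - L x := fun x => rfl
  set J : Matrix (Fin 2) (Fin 2) ℂ := !![1, 0; 0, -1] with hJdef
  have hJstar : star J = J := by
    ext i j
    fin_cases i <;> fin_cases j <;> simp [hJdef, Matrix.star_apply]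
  have hJmem : J ∈ unitary (Matrix (Fin 2) (Fin 2) ℂ) := by
    have : J * J = 1 := by
      rw [hJdef, Matrix.mul_fin_two, Matrix.one_fin_two]
      norm_num
    exact ⟨by rw [hJstar]; exact this, by rw [hJstar]; exact this⟩
  have key : ∀ x, w x = (((f₁ x - f₂ x) / 2 : ℝ) : ℂ) • (u x * J * star (u x))
      + ((|f₁ x - f₂ x| / 2 : ℝ) : ℂ) • J := by
    intro x
    have hDx : D x = !![(f₁ x : ℂ), 0; 0, (f₂ x : ℂ)] := rfl
    have hLx : L x = !![((min (f₁ x) (f₂ x) : ℝ) : ℂ), 0; 0, ((max (f₁ x) (f₂ x) : ℝ) : ℂ)] := rfl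
    rw [hw, hustar, hux, hDx, hLx]
    rcases le_total (f₁ x) (f₂ x) with h | h
    · rw [min_eq_left h, max_eq_right h, abs_of_nonpos (by linarith : f₁ x - f₂ x ≤ 0)]
      ext i j
      fin_cases i <;> fin_cases j <;>
        simp [hJdef, Matrix.mul_fin_two, Matrix.smul_apply] <;> push_cast <;>
        first
          | linear_combination (((f₁ x : ℂ) + (f₂ x : ℂ)) / 2) * hcs x
          | linear_combination (-((f₁ x : ℂ) + (f₂ x : ℂ)) / 2) * hcs x
          | ring
    · rw [min_eq_right h, max_eq_left h, abs_of_nonneg (by linarith : 0 ≤ f₁ x - f₂ x)]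
      ext i j
      fin_cases i <;> fin_cases j <;>
        simp [hJdef, Matrix.mul_fin_two, Matrix.smul_apply] <;> push_cast <;>
        first
          | linear_combination (((f₁ x : ℂ) + (f₂ x : ℂ)) / 2) * hcs x
          | linear_combination (-((f₁ x : ℂ) + (f₂ x : ℂ)) / 2) * hcs x
          | ring
  refine ⟨u, w, huni, fun x => hw x, ?_⟩
  rw [ContinuousMap.norm_lt_iff _ hε]
  intro x
  have hnu : ‖u x‖ = 1 := CStarRing.norm_of_mem_unitary (huni x)
  have hnJ : ‖J‖ = 1 := CStarRing.norm_of_mem_unitary hJmem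
  have hnus : ‖star (u x)‖ = 1 := CStarRing.norm_of_mem_unitary (Unitary.star_mem (huni x))
  by_cases hmid : |f₂ x - f₁ x| ≤ δ
  · -- middle region: use the norm bound
    have hP : ‖u x * J * star (u x)‖ ≤ 1 := by
      calc ‖u x * J * star (u x)‖ ≤ ‖u x * J‖ * ‖star (u x)‖ := norm_mul_le _ _
        _ ≤ ‖u x‖ * ‖J‖ * ‖star (u x)‖ :=
            mul_le_mul_of_nonneg_right (norm_mul_le _ _) (norm_nonneg _)
        _ = 1 := by rw [hnu, hnJ, hnus]; ring
    have habs : ‖(((f₁ x - f₂ x) / 2 : ℝ) : ℂ)‖ = |f₁ x - f₂ x| / 2 := by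
      rw [Complex.norm_real, Real.norm_eq_abs, abs_div]
      norm_num
    have habs2 : ‖((|f₁ x - f₂ x| / 2 : ℝ) : ℂ)‖ = |f₁ x - f₂ x| / 2 := by
      rw [Complex.norm_real, Real.norm_eq_abs, abs_div, abs_abs]
      norm_num
    have hb : ‖w x‖ ≤ |f₁ x - f₂ x| := by
      calc ‖w x‖ ≤ ‖(((f₁ x - f₂ x) / 2 : ℝ) : ℂ) • (u x * J * star (u x))‖
          + ‖((|f₁ x - f₂ x| / 2 : ℝ) : ℂ) • J‖ := by rw [key x]; exact norm_add_le _ _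
        _ = (|f₁ x - f₂ x| / 2) * ‖u x * J * star (u x)‖ + (|f₁ x - f₂ x| / 2) * ‖J‖ := by
            rw [norm_smul, norm_smul, habs, habs2]
        _ ≤ (|f₁ x - f₂ x| / 2) * 1 + (|f₁ x - f₂ x| / 2) * 1 := by
            gcongr <;> first | exact hP | exact le_of_eq hnJ
        _ = |f₁ x - f₂ x| := by ring
    have : |f₁ x - f₂ x| ≤ δ := by rwa [abs_sub_comm]
    calc ‖w x‖ ≤ |f₁ x - f₂ x| := hb
      _ ≤ δ := this
      _ < ε := by rw [hδdef]; linarith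
  · push_neg at hmid
    rcases le_total 0 (f₂ x - f₁ x) with hsign | hsign
    · -- f₂ x - f₁ x ≥ δ : u x = 1, w x = 0
      have hd : δ < f₂ x - f₁ x := by rwa [abs_of_nonneg hsign] at hmid
      have ht : (δ - (f₂ x - f₁ x)) / (2 * δ) ≤ 0 :=
        div_nonpos_of_nonpos_of_nonneg (by linarith) (by linarith)
      have hθ0 : θ x = 0 := by
        rw [hθdef]
        simp only
        rw [max_eq_left ht, min_eq_right zero_le_one, mul_zero]
      have hc1 : c x = 1 := by rw [hcdef]; simp [hθ0]
      have hs0 : s x = 0 := by rw [hsdef]; simp [hθ0]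
      have hP : u x * J * star (u x) = J := by
        rw [hustar, hux, hc1, hs0]
        ext i j
        fin_cases i <;> fin_cases j <;> simp [hJdef, Matrix.mul_fin_two]
      have hwx : w x = 0 := by
        rw [key x, hP, ← add_smul]
        have : ((((f₁ x - f₂ x) / 2 : ℝ) : ℂ) + ((|f₁ x - f₂ x| / 2 : ℝ) : ℂ)) = 0 := by
          rw [abs_sub_comm, abs_of_nonneg hsign]
          push_cast
          ring
        rw [this, zero_smul]
      rw [hwx, norm_zero]
      exact hε
    · -- f₂ x - f₁ x ≤ -δ : u x is the rotation by π/2, w x = 0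
      have hd : f₂ x - f₁ x < -δ := by
        rw [abs_of_nonpos hsign] at hmid
        linarith
      have ht1 : (1 : ℝ) ≤ (δ - (f₂ x - f₁ x)) / (2 * δ) := by
        rw [le_div_iff₀ (by linarith : (0:ℝ) < 2 * δ)]
        linarith
      have hθ1 : θ x = π / 2 := by
        rw [hθdef]
        simp only
        rw [max_eq_right (by linarith : (0:ℝ) ≤ (δ - (f₂ x - f₁ x)) / (2 * δ)),
          min_eq_left ht1, mul_one]
      have hc0 : c x = 0 := by rw [hcdef]; simp [hθ1]
      have hs1 : s x = 1 := by rw [hsdef]; simp [hθ1]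
      have hP : u x * J * star (u x) = -J := by
        rw [hustar, hux, hc0, hs1]
        ext i j
        fin_cases i <;> fin_cases j <;> simp [hJdef, Matrix.mul_fin_two]
      have hwx : w x = 0 := by
        rw [key x, hP, smul_neg, ← neg_smul, ← add_smul]
        have : (-(((f₁ x - f₂ x) / 2 : ℝ) : ℂ) + ((|f₁ x - f₂ x| / 2 : ℝ) : ℂ)) = 0 := by
          rw [abs_sub_comm, abs_of_nonpos hsign]
          push_cast
          ring
        rw [this, zero_smul]
      rw [hwx, norm_zero]
      exact hε
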